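/- arXiv:1506.08592 — 2 statements merged into one kernel-verified Lean document; each statement's English description precedes it below -/
import Mathlib

section
/- For every finite simple graph G and every deterministic online independent set algorithm ALG, there exists an ordering φ of V(G) that is conservative with respect to the run of ALG — meaning that whenever the vertex revealed at some step has a neighbor among the vertices already accepted by ALG (a pointless request), every vertex not yet revealed at that step also has a neighbor among the vertices already accepted by ALG — and on which ALG accepts an independent set of size at most I^O(G). -/
namespace OnlinePaper

/-- A deterministic online algorithm in the vertex-arrival model: given the number `n` of
previously revealed vertices and the Boolean adjacency matrix on the `n + 1` revealed
vertices (the newly revealed vertex has index `Fin.last n`), decide whether to accept the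
newly revealed vertex.  The algorithm sees only this order-canonical information. -/
def OnlineAlg : Type := (n : ℕ) → (Fin (n + 1) → Fin (n + 1) → Bool) → Bool

/-- The complement algorithm `ĀLG`: it simulates `A` and accepts exactly the requests
that `A` rejects. -/
def coAlg (A : OnlineAlg) : OnlineAlg := fun n M => !(A n M)

variable {V : Type}

/-- The Boolean adjacency matrix on the first `i + 1` revealed vertices, when the graph `G`
is presented in the order `φ`. -/
noncomputable def revealedMatrix [Fintype V] (G : SimpleGraph V)
    (φ : Fin (Fintype.card V) ≃ V) (i : Fin (Fintype.card V)) :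
    Fin (i.val + 1) → Fin (i.val + 1) → Bool :=
  fun a b =>
    @decide (G.Adj (φ ⟨a.val, by have := a.isLt; have := i.isLt; omega⟩)
        (φ ⟨b.val, by have := b.isLt; have := i.isLt; omega⟩)) (Classical.propDecidable _)

/-- Whether the algorithm `A` accepts the vertex revealed at step `i` when the graph `G` is
presented in the order `φ`. -/
noncomputable def accepts [Fintype V] (A : OnlineAlg) (G : SimpleGraph V)
    (φ : Fin (Fintype.card V) ≃ V) (i : Fin (Fintype.card V)) : Bool :=
  A i.val (revealedMatrix G φ i)

/-- The set of vertices accepted by `A` when `G` is presented in the order `φ`. -/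
noncomputable def acceptedSet [Fintype V] (A : OnlineAlg) (G : SimpleGraph V)
    (φ : Fin (Fintype.card V) ≃ V) : Finset V :=
  Finset.univ.filter (fun v => accepts A G φ (φ.symm v) = true)

/-- `s` is an independent set of `G`. -/
def IsIndep (G : SimpleGraph V) (s : Finset V) : Prop := ∀ a ∈ s, ∀ b ∈ s, ¬ G.Adj a b

/-- `s` is a vertex cover of `G`. -/
def IsVC (G : SimpleGraph V) (s : Finset V) : Prop := ∀ a b : V, G.Adj a b → a ∈ s ∨ b ∈ s

/-- `s` is a dominating set of `G`. -/
def IsDom (G : SimpleGraph V) (s : Finset V) : Prop := ∀ v : V, v ∈ s ∨ ∃ u ∈ s, G.Adj u v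

/-- `s` is an inclusion-maximal independent set of `G`. -/
def IsMaxIndep [DecidableEq V] (G : SimpleGraph V) (s : Finset V) : Prop :=
  IsIndep G s ∧ ∀ v ∉ s, ¬ IsIndep G (insert v s)

/-- For maximization problems: the worst-case (minimum over orderings) number of requests
accepted by `A` on `G`. -/
noncomputable def minScore [Fintype V] (A : OnlineAlg) (G : SimpleGraph V) : ℕ :=
  sInf {m | ∃ φ : Fin (Fintype.card V) ≃ V, (acceptedSet A G φ).card = m}

/-- For minimization problems: the worst-case (maximum over orderings) number of requests
accepted by `A` on `G`. -/
noncomputable def maxScore [Fintype V] (A : OnlineAlg) (G : SimpleGraph V) : ℕ :=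
  sSup {m | ∃ φ : Fin (Fintype.card V) ≃ V, (acceptedSet A G φ).card = m}

/-- The online independence number `I^O(G)`: the largest `m` such that some online
algorithm accepts, on every ordering, an independent set of size at least `m`. -/
noncomputable def onlineIndepNum [Fintype V] (G : SimpleGraph V) : ℕ :=
  sSup {m | ∃ A : OnlineAlg, ∀ φ : Fin (Fintype.card V) ≃ V,
      IsIndep G (acceptedSet A G φ) ∧ m ≤ (acceptedSet A G φ).card}

/-- The online vertex cover number `V^O(G)`: the smallest `m` such that some online
algorithm accepts, on every ordering, a vertex cover of size at most `m`. -/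
noncomputable def onlineVCNum [Fintype V] (G : SimpleGraph V) : ℕ :=
  sInf {m | ∃ A : OnlineAlg, ∀ φ : Fin (Fintype.card V) ≃ V,
      IsVC G (acceptedSet A G φ) ∧ (acceptedSet A G φ).card ≤ m}

/-- The online domination number `D^O(G)`: the smallest `m` such that some online
algorithm accepts, on every ordering, a dominating set of size at most `m`. -/
noncomputable def onlineDomNum [Fintype V] (G : SimpleGraph V) : ℕ :=
  sInf {m | ∃ A : OnlineAlg, ∀ φ : Fin (Fintype.card V) ≃ V,
      IsDom G (acceptedSet A G φ) ∧ (acceptedSet A G φ).card ≤ m}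

/-- The greedy independent set decision: accept the newly revealed vertex iff none of its
previously revealed neighbors has been accepted (by the same greedy rule). -/
def gisAux : (n : ℕ) → (Fin (n + 1) → Fin (n + 1) → Bool) → Bool
  | n, M =>
    decide (∀ j : Fin n,
      gisAux j.val (fun a b => M (Fin.castLE (Nat.succ_le_succ j.isLt.le) a)
        (Fin.castLE (Nat.succ_le_succ j.isLt.le) b)) = true →
      M j.castSucc (Fin.last n) = false)
termination_by n => n
decreasing_by all_goals exact Fin.isLt _

/-- `GIS`, the greedy algorithm for Online Independent Set. -/
def gisAlg : OnlineAlg := fun n M => gisAux n M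

/-- `GDS`, the greedy algorithm for Online Dominating Set (the same algorithm as `GIS`). -/
def gdsAlg : OnlineAlg := gisAlg

/-- The greedy vertex cover decision: accept the newly revealed vertex iff it has a
previously revealed neighbor that was rejected (by the same greedy rule). -/
def gvcAux : (n : ℕ) → (Fin (n + 1) → Fin (n + 1) → Bool) → Bool
  | n, M =>
    decide (∃ j : Fin n,
      gvcAux j.val (fun a b => M (Fin.castLE (Nat.succ_le_succ j.isLt.le) a)
        (Fin.castLE (Nat.succ_le_succ j.isLt.le) b)) = false ∧
      M j.castSucc (Fin.last n) = true)
termination_by n => n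
decreasing_by all_goals exact Fin.isLt _

/-- `GVC`, the greedy algorithm for Online Vertex Cover. -/
def gvcAlg : OnlineAlg := fun n M => gvcAux n M

/-- `IS-STAR`: rejects the first vertex; rejects the second vertex if it is adjacent to the
first; rejects any later vertex having more than one previously revealed neighbor; accepts
every other vertex. -/
def isStarAlg : OnlineAlg := fun n M =>
  let c := (Finset.univ.filter (fun j : Fin n => M j.castSucc (Fin.last n) = true)).card
  if n = 0 then false
  else if n = 1 then decide (c = 0)
  else decide (c ≤ 1)

/-- `Almost-GIS`: identical to `GIS` except that it additionally rejects any revealed vertex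
having at least two previously revealed neighbors. -/
def almostGisAux : (n : ℕ) → (Fin (n + 1) → Fin (n + 1) → Bool) → Bool
  | n, M =>
    (decide (∀ j : Fin n,
      almostGisAux j.val (fun a b => M (Fin.castLE (Nat.succ_le_succ j.isLt.le) a)
        (Fin.castLE (Nat.succ_le_succ j.isLt.le) b)) = true →
      M j.castSucc (Fin.last n) = false)) &&
    decide ((Finset.univ.filter (fun j : Fin n => M j.castSucc (Fin.last n) = true)).card ≤ 1)
termination_by n => n
decreasing_by all_goals exact Fin.isLt _

/-- `Almost-GIS` as an online algorithm. -/
def almostGisAlg : OnlineAlg := fun n M => almostGisAux n M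

/-- The star graph `S_n`: a center `0` adjacent to `n` further vertices, and no other edges. -/
def starGraph (n : ℕ) : SimpleGraph (Fin (n + 1)) where
  Adj a b := a ≠ b ∧ (a = 0 ∨ b = 0)
  symm := ⟨fun _ _ h => ⟨h.1.symm, h.2.symm⟩⟩
  loopless := ⟨fun _ h => h.1 rfl⟩

/-- `v` is an isolated vertex of `G`. -/
def IsIsolated (G : SimpleGraph V) (v : V) : Prop := ∀ u : V, ¬ G.Adj v u

/-- `k(G)`: the number of isolated vertices of `G`. -/
noncomputable def numIsolated [Fintype V] (G : SimpleGraph V) : ℕ :=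
  Finset.card (@Finset.filter V (fun v => IsIsolated G v) (Classical.decPred _) Finset.univ)

/-- `G'`: the subgraph of `G` induced by the non-isolated vertices. -/
def inducedNonIsolated (G : SimpleGraph V) : SimpleGraph {v : V // ¬ IsIsolated G v} :=
  SimpleGraph.comap Subtype.val G

noncomputable instance {α : Type} [Fintype α] {p : α → Prop} : Fintype {v : α // p v} :=
  Fintype.ofFinite _

/-- The independent domination number: the minimum size of an inclusion-maximal independent
set of `G`. -/
noncomputable def indepDomNum [DecidableEq V] (G : SimpleGraph V) : ℕ :=
  sInf {m | ∃ s : Finset V, IsMaxIndep G s ∧ s.card = m}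

/-- The independence number `α(G)`: the maximum size of an independent set of `G`. -/
noncomputable def indepNum (G : SimpleGraph V) : ℕ :=
  sSup {m | ∃ s : Finset V, IsIndep G s ∧ s.card = m}

/-- `G` is a Freckle Graph: `k(G) + s(G') ≥ I^O(G')`. -/
noncomputable def IsFreckle [Fintype V] [DecidableEq V] (G : SimpleGraph V) : Prop :=
  onlineIndepNum (inducedNonIsolated G) ≤ numIsolated G + indepDomNum (inducedNonIsolated G)


section Stmt6

open Finset

attribute [local instance] Classical.propDecidable

/-- The set of previously revealed vertices that are "fed" to the simulated algorithm:
those having no neighbor among previously accepted vertices. -/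
noncomputable def pFed (n : ℕ) (M : Fin (n + 1) → Fin (n + 1) → Bool)
    (acc : Fin n → Bool) : Finset (Fin n) :=
  Finset.univ.filter (fun j : Fin n =>
    ∀ j' : Fin n, j' < j → acc j' = true → M j'.castSucc j.castSucc = false)

/-- Lifting of indices of the fed submatrix into the full revealed matrix. -/
noncomputable def pLift (n : ℕ) (M : Fin (n + 1) → Fin (n + 1) → Bool)
    (acc : Fin n → Bool) (x : Fin ((pFed n M acc).card + 1)) : Fin (n + 1) :=
  if hx : x.val < (pFed n M acc).card
  then ((pFed n M acc).orderEmbOfFin rfl ⟨x.val, hx⟩).castSucc else Fin.last n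

/-- Body of the pointless-skipping simulation of `A`. -/
noncomputable def pBody (A : OnlineAlg) (n : ℕ) (M : Fin (n + 1) → Fin (n + 1) → Bool)
    (acc : Fin n → Bool) : Bool :=
  if (∀ j : Fin n, acc j = true → M j.castSucc (Fin.last n) = false) then
    A (pFed n M acc).card (fun a b => M (pLift n M acc a) (pLift n M acc b))
  else false

/-- The pointless-skipping simulation of `A`. -/
noncomputable def pAux (A : OnlineAlg) : (n : ℕ) → (Fin (n + 1) → Fin (n + 1) → Bool) → Bool
  | n, M => pBody A n M (fun j => pAux A j.val
      (fun a b => M (Fin.castLE (Nat.succ_le_succ j.isLt.le) a)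
        (Fin.castLE (Nat.succ_le_succ j.isLt.le) b)))
termination_by n => n
decreasing_by all_goals exact Fin.isLt _

noncomputable def pAlg (A : OnlineAlg) : OnlineAlg := fun n M => pAux A n M

variable {V : Type} [Fintype V]

theorem pAlg_accepts_eq (A : OnlineAlg) (G : SimpleGraph V) (ψ : Fin (Fintype.card V) ≃ V)
    (i : Fin (Fintype.card V)) :
    accepts (pAlg A) G ψ i = pBody A i.val (revealedMatrix G ψ i)
      (fun j => accepts (pAlg A) G ψ ⟨j.val, j.isLt.trans i.isLt⟩) := by
  show pAux A i.val (revealedMatrix G ψ i) = _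
  rw [pAux]
  rfl

/-- `i`-th revealed vertex has no neighbour among the previously accepted (by `pAlg A`)
vertices. -/
def fedP (A : OnlineAlg) (G : SimpleGraph V) (ψ : Fin (Fintype.card V) ≃ V)
    (i : Fin (Fintype.card V)) : Prop :=
  ∀ j, j < i → accepts (pAlg A) G ψ j = true → ¬ G.Adj (ψ j) (ψ i)

noncomputable def fedSet (A : OnlineAlg) (G : SimpleGraph V)
    (ψ : Fin (Fintype.card V) ≃ V) : Finset (Fin (Fintype.card V)) :=
  Finset.univ.filter (fedP A G ψ)

noncomputable def fedBelow (A : OnlineAlg) (G : SimpleGraph V)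
    (ψ : Fin (Fintype.card V) ≃ V) (i : Fin (Fintype.card V)) :
    Finset (Fin (Fintype.card V)) :=
  (fedSet A G ψ).filter (· < i)

noncomputable def nthV (A : OnlineAlg) (G : SimpleGraph V) (ψ : Fin (Fintype.card V) ≃ V)
    (i : Fin (Fintype.card V)) (a : Fin ((fedBelow A G ψ i).card + 1)) : V :=
  if ha : a.val < (fedBelow A G ψ i).card
  then ψ ((fedBelow A G ψ i).orderEmbOfFin rfl ⟨a.val, ha⟩) else ψ i

theorem rm_eq_decide (G : SimpleGraph V) (ψ : Fin (Fintype.card V) ≃ V)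
    (i : Fin (Fintype.card V)) (a b : Fin (i.val + 1))
    (h1 : a.val < Fintype.card V) (h2 : b.val < Fintype.card V) :
    revealedMatrix G ψ i a b =
      @decide (G.Adj (ψ ⟨a.val, h1⟩) (ψ ⟨b.val, h2⟩)) (Classical.propDecidable _) := rfl

theorem rm_false_iff (G : SimpleGraph V) (ψ : Fin (Fintype.card V) ≃ V)
    (i : Fin (Fintype.card V)) (a b : Fin (i.val + 1))
    (h1 : a.val < Fintype.card V) (h2 : b.val < Fintype.card V) :
    revealedMatrix G ψ i a b = false ↔ ¬ G.Adj (ψ ⟨a.val, h1⟩) (ψ ⟨b.val, h2⟩) := by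
  rw [rm_eq_decide G ψ i a b h1 h2]
  exact decide_eq_false_iff_not

end Stmt6
section Stmt6b

open Finset

attribute [local instance] Classical.propDecidable

variable {V : Type} [Fintype V]

theorem fedAux_iff (A : OnlineAlg) (G : SimpleGraph V) (ψ : Fin (Fintype.card V) ≃ V)
    (i : Fin (Fintype.card V)) (m : ℕ) (hm1 : m < i.val + 1) (hmN : m < Fintype.card V) :
    (∀ j' : Fin i.val, j'.val < m →
        accepts (pAlg A) G ψ ⟨j'.val, j'.isLt.trans i.isLt⟩ = true →
        revealedMatrix G ψ i j'.castSucc ⟨m, hm1⟩ = false) ↔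
      fedP A G ψ ⟨m, hmN⟩ := by
  constructor
  · intro h j hj hacc
    have hjm : j.val < m := hj
    have h2 := h ⟨j.val, by omega⟩ hjm hacc
    rw [rm_false_iff G ψ i _ _ j.isLt hmN] at h2
    exact h2
  · intro h j' hj' hacc
    rw [rm_false_iff G ψ i _ _ (j'.isLt.trans i.isLt) hmN]
    exact h ⟨j'.val, j'.isLt.trans i.isLt⟩ hj' hacc

theorem fed_of_accepts (A : OnlineAlg) (G : SimpleGraph V) (ψ : Fin (Fintype.card V) ≃ V)
    (i : Fin (Fintype.card V)) (hacc : accepts (pAlg A) G ψ i = true) :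
    fedP A G ψ i := by
  rw [pAlg_accepts_eq] at hacc
  unfold pBody at hacc
  split at hacc
  next h =>
    exact (fedAux_iff A G ψ i i.val (Nat.lt_succ_self _) i.isLt).mp
      (fun j' _ ha => h j' ha)
  next h => exact absurd hacc (by simp)

theorem alg_congr (A : OnlineAlg) {m m' : ℕ} (h : m = m')
    (M : Fin (m + 1) → Fin (m + 1) → Bool) (M' : Fin (m' + 1) → Fin (m' + 1) → Bool)
    (hM : ∀ a b : Fin (m + 1), M a b = M' ⟨a.val, by omega⟩ ⟨b.val, by omega⟩) :
    A m M = A m' M' := by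
  subst h
  have : M = M' := by
    funext a b
    rw [hM a b]
  rw [this]

theorem accepts_of_fed (A : OnlineAlg) (G : SimpleGraph V) (ψ : Fin (Fintype.card V) ≃ V)
    (i : Fin (Fintype.card V)) (hfed : fedP A G ψ i) :
    accepts (pAlg A) G ψ i = A (fedBelow A G ψ i).card
      (fun a b => @decide (G.Adj (nthV A G ψ i a) (nthV A G ψ i b))
        (Classical.propDecidable _)) := by
  rw [pAlg_accepts_eq]
  unfold pBody
  set RM := revealedMatrix G ψ i with hRM
  set accN : Fin i.val → Bool :=
    (fun j => accepts (pAlg A) G ψ ⟨j.val, j.isLt.trans i.isLt⟩) with haccN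
  split
  case isFalse hcond =>
    exact absurd (fun j ha => (fedAux_iff A G ψ i i.val (Nat.lt_succ_self _) i.isLt).mpr
      hfed j j.isLt ha) hcond
  case isTrue hcond =>
  -- membership characterisation of the fed set
  have hQfed : ∀ j : Fin i.val, j ∈ pFed i.val RM accN ↔
      fedP A G ψ ⟨j.val, j.isLt.trans i.isLt⟩ := by
    intro j
    constructor
    · intro hj
      have hq := (Finset.mem_filter.mp hj).2
      exact (fedAux_iff A G ψ i j.val (by omega) (j.isLt.trans i.isLt)).mp
        (fun j' h1 h2 => hq j' h1 h2)
    · intro hf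
      exact Finset.mem_filter.mpr ⟨Finset.mem_univ _,
        fun j' h1 h2 => (fedAux_iff A G ψ i j.val (by omega) (j.isLt.trans i.isLt)).mpr
          hf j' h1 h2⟩
  -- cardinalities agree
  have hcard : (fedBelow A G ψ i).card = (pFed i.val RM accN).card := by
    refine Finset.card_bij' (fun j hj => ⟨j.val, ?_⟩)
      (fun j _ => ⟨j.val, j.isLt.trans i.isLt⟩) ?_ ?_ ?_ ?_
    · exact (Finset.mem_filter.mp hj).2
    · intro j hj
      have h1 := Finset.mem_filter.mp hj
      have h2 := (Finset.mem_filter.mp h1.1).2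
      exact (hQfed _).mpr h2
    · intro j hj
      have h2 := (hQfed _).mp hj
      exact Finset.mem_filter.mpr ⟨Finset.mem_filter.mpr ⟨Finset.mem_univ _, h2⟩, j.isLt⟩
    · intro a ha; exact Fin.ext rfl
    · intro a ha; exact Fin.ext rfl
  -- enumerations agree
  have henum : ∀ a : Fin ((fedBelow A G ψ i).card),
      ((fedBelow A G ψ i).orderEmbOfFin rfl a : Fin (Fintype.card V)) =
        ⟨((pFed i.val RM accN).orderEmbOfFin rfl ⟨a.val, hcard ▸ a.isLt⟩).val,
          ((pFed i.val RM accN).orderEmbOfFin rfl ⟨a.val, hcard ▸ a.isLt⟩).isLt.trans i.isLt⟩ := by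
    have huniq := Finset.orderEmbOfFin_unique (s := fedBelow A G ψ i)
      (k := (fedBelow A G ψ i).card) rfl
      (f := fun a => (⟨((pFed i.val RM accN).orderEmbOfFin rfl ⟨a.val, hcard ▸ a.isLt⟩).val,
          ((pFed i.val RM accN).orderEmbOfFin rfl ⟨a.val, hcard ▸ a.isLt⟩).isLt.trans i.isLt⟩ :
            Fin (Fintype.card V)))
      (fun a => by
        have hmem := Finset.orderEmbOfFin_mem (pFed i.val RM accN) rfl ⟨a.val, hcard ▸ a.isLt⟩
        have hf := (hQfed _).mp hmem
        exact Finset.mem_filter.mpr ⟨Finset.mem_filter.mpr ⟨Finset.mem_univ _, hf⟩,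
          ((pFed i.val RM accN).orderEmbOfFin rfl ⟨a.val, hcard ▸ a.isLt⟩).isLt⟩)
      (fun a1 a2 h12 => by
        exact ((pFed i.val RM accN).orderEmbOfFin rfl).strictMono
          (show (⟨a1.val, hcard ▸ a1.isLt⟩ : Fin _) < ⟨a2.val, hcard ▸ a2.isLt⟩ from h12))
    intro a
    exact (congrFun huniq a).symm
  -- the selected vertices agree
  have key : ∀ (x : Fin ((fedBelow A G ψ i).card + 1))
      (hx : x.val < (pFed i.val RM accN).card + 1),
      nthV A G ψ i x = ψ ⟨(pLift i.val RM accN ⟨x.val, hx⟩).val,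
        lt_of_le_of_lt (Nat.lt_succ_iff.mp (pLift i.val RM accN ⟨x.val, hx⟩).isLt) i.isLt⟩ := by
    intro x hx
    unfold nthV pLift
    split
    next h1 =>
      split
      next h2 =>
        rw [henum ⟨x.val, h1⟩]
        exact congrArg ψ (Fin.ext rfl)
      next h2 =>
        have h2' : ¬ x.val < (pFed i.val RM accN).card := h2
        omega
    next h1 =>
      split
      next h2 =>
        have h2' : x.val < (pFed i.val RM accN).card := h2
        omega
      next h2 =>
        exact congrArg ψ (Fin.ext rfl)
  -- apply alg_congr
  refine (alg_congr A hcard _ _ ?_).symm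
  intro a b
  have hgen : ∀ (u v : Fin (i.val + 1)) (h1 : u.val < Fintype.card V)
      (h2 : v.val < Fintype.card V) (x y : V), ψ ⟨u.val, h1⟩ = x → ψ ⟨v.val, h2⟩ = y →
      @decide (G.Adj x y) (Classical.propDecidable _) = RM u v := by
    intro u v h1 h2 x y hxe hye
    rw [← hxe, ← hye]
    exact (rm_eq_decide G ψ i u v h1 h2).symm
  exact hgen _ _ _ _ _ _ (key a (by have := a.isLt; omega)).symm
    (key b (by have := b.isLt; omega)).symm

end Stmt6b
section Stmt6c

open Finset

attribute [local instance] Classical.propDecidable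

variable {V : Type} [Fintype V]

theorem pAlg_indep (A : OnlineAlg) (G : SimpleGraph V) (ψ : Fin (Fintype.card V) ≃ V) :
    IsIndep G (acceptedSet (pAlg A) G ψ) := by
  intro a ha b hb hadj
  rw [acceptedSet, Finset.mem_filter] at ha hb
  have ha2 := ha.2
  have hb2 := hb.2
  have hne : ψ.symm a ≠ ψ.symm b := by
    intro h
    apply G.ne_of_adj hadj
    rw [← ψ.apply_symm_apply a, ← ψ.apply_symm_apply b, h]
  rcases lt_or_gt_of_ne hne with h | h
  · have hf := fed_of_accepts A G ψ _ hb2 _ h ha2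
    rw [ψ.apply_symm_apply, ψ.apply_symm_apply] at hf
    exact hf hadj
  · have hf := fed_of_accepts A G ψ _ ha2 _ h hb2
    rw [ψ.apply_symm_apply, ψ.apply_symm_apply] at hf
    exact hf hadj.symm

theorem acceptedSet_card (B : OnlineAlg) (G : SimpleGraph V) (φ : Fin (Fintype.card V) ≃ V) :
    (acceptedSet B G φ).card =
      (Finset.univ.filter (fun t => accepts B G φ t = true)).card := by
  refine Finset.card_bij' (fun v _ => φ.symm v) (fun t _ => φ t) ?_ ?_ ?_ ?_
  · intro v hv
    exact Finset.mem_filter.mpr ⟨Finset.mem_univ _, (Finset.mem_filter.mp hv).2⟩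
  · intro t ht
    refine Finset.mem_filter.mpr ⟨Finset.mem_univ _, ?_⟩
    rw [Equiv.symm_apply_apply]
    exact (Finset.mem_filter.mp ht).2
  · intro v _; exact φ.apply_symm_apply v
  · intro t _; exact φ.symm_apply_apply t

theorem fedSet_card_le (A : OnlineAlg) (G : SimpleGraph V) (ψ : Fin (Fintype.card V) ≃ V) :
    (fedSet A G ψ).card ≤ Fintype.card V :=
  (Finset.card_le_univ _).trans_eq (by simp)

theorem fedSet_compl_card (A : OnlineAlg) (G : SimpleGraph V) (ψ : Fin (Fintype.card V) ≃ V) :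
    (fedSet A G ψ)ᶜ.card = Fintype.card V - (fedSet A G ψ).card := by
  rw [Finset.card_compl, Fintype.card_fin]

/-- The reordering: fed vertices first (in order), then the rest (in order). -/
noncomputable def sigFun (A : OnlineAlg) (G : SimpleGraph V) (ψ : Fin (Fintype.card V) ≃ V)
    (t : Fin (Fintype.card V)) : Fin (Fintype.card V) :=
  if h : t.val < (fedSet A G ψ).card then (fedSet A G ψ).orderEmbOfFin rfl ⟨t.val, h⟩
  else (fedSet A G ψ)ᶜ.orderEmbOfFin (fedSet_compl_card A G ψ)
    ⟨t.val - (fedSet A G ψ).card, by have := t.isLt; omega⟩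

theorem sigFun_pos (A : OnlineAlg) (G : SimpleGraph V) (ψ : Fin (Fintype.card V) ≃ V)
    (t : Fin (Fintype.card V)) (ht : t.val < (fedSet A G ψ).card) :
    sigFun A G ψ t = (fedSet A G ψ).orderEmbOfFin rfl ⟨t.val, ht⟩ := dif_pos ht

theorem sigFun_mem_pos (A : OnlineAlg) (G : SimpleGraph V) (ψ : Fin (Fintype.card V) ≃ V)
    (t : Fin (Fintype.card V)) (ht : t.val < (fedSet A G ψ).card) :
    sigFun A G ψ t ∈ fedSet A G ψ := by
  rw [sigFun_pos A G ψ t ht]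
  exact Finset.orderEmbOfFin_mem _ _ _

theorem sigFun_mem_neg (A : OnlineAlg) (G : SimpleGraph V) (ψ : Fin (Fintype.card V) ≃ V)
    (t : Fin (Fintype.card V)) (ht : ¬ t.val < (fedSet A G ψ).card) :
    sigFun A G ψ t ∉ fedSet A G ψ := by
  rw [show sigFun A G ψ t = (fedSet A G ψ)ᶜ.orderEmbOfFin (fedSet_compl_card A G ψ)
    ⟨t.val - (fedSet A G ψ).card, by have := t.isLt; omega⟩ from dif_neg ht]
  exact Finset.mem_compl.mp (Finset.orderEmbOfFin_mem _ _ _)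

theorem sigFun_bijective (A : OnlineAlg) (G : SimpleGraph V) (ψ : Fin (Fintype.card V) ≃ V) :
    Function.Bijective (sigFun A G ψ) := by
  refine Finite.injective_iff_bijective.mp ?_
  intro t1 t2 he
  unfold sigFun at he
  split at he
  next h1 =>
    split at he
    next h2 =>
      have := ((fedSet A G ψ).orderEmbOfFin rfl).injective he
      injection this with hv
      exact Fin.ext hv
    next h2 =>
      have m1 := Finset.orderEmbOfFin_mem (fedSet A G ψ) rfl ⟨t1.val, h1⟩
      rw [he] at m1
      exact absurd m1 (Finset.mem_compl.mp (Finset.orderEmbOfFin_mem _ _ _))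
  next h1 =>
    split at he
    next h2 =>
      have m1 := Finset.orderEmbOfFin_mem (fedSet A G ψ) rfl ⟨t2.val, h2⟩
      rw [← he] at m1
      exact absurd m1 (Finset.mem_compl.mp (Finset.orderEmbOfFin_mem _ _ _))
    next h2 =>
      have := ((fedSet A G ψ)ᶜ.orderEmbOfFin (fedSet_compl_card A G ψ)).injective he
      have hv := congrArg Fin.val this
      simp only at hv
      have := t1.isLt
      have := t2.isLt
      exact Fin.ext (by omega)

noncomputable def sigEquiv (A : OnlineAlg) (G : SimpleGraph V) (ψ : Fin (Fintype.card V) ≃ V) :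
    Fin (Fintype.card V) ≃ Fin (Fintype.card V) :=
  Equiv.ofBijective _ (sigFun_bijective A G ψ)

noncomputable def phiOrd (A : OnlineAlg) (G : SimpleGraph V) (ψ : Fin (Fintype.card V) ≃ V) :
    Fin (Fintype.card V) ≃ V :=
  (sigEquiv A G ψ).trans ψ

theorem phiOrd_apply (A : OnlineAlg) (G : SimpleGraph V) (ψ : Fin (Fintype.card V) ≃ V)
    (t : Fin (Fintype.card V)) : phiOrd A G ψ t = ψ (sigFun A G ψ t) := rfl

theorem mem_fedSet_exists (A : OnlineAlg) (G : SimpleGraph V) (ψ : Fin (Fintype.card V) ≃ V)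
    (j : Fin (Fintype.card V)) (hj : j ∈ fedSet A G ψ) :
    ∃ t : Fin (Fintype.card V), t.val < (fedSet A G ψ).card ∧ sigFun A G ψ t = j := by
  have hco : j ∈ (↑(fedSet A G ψ) : Set (Fin (Fintype.card V))) := hj
  rw [← Finset.range_orderEmbOfFin (fedSet A G ψ) rfl] at hco
  obtain ⟨y, hy⟩ := hco
  refine ⟨⟨y.val, y.isLt.trans_le (fedSet_card_le A G ψ)⟩, y.isLt, ?_⟩
  rw [sigFun_pos A G ψ _ y.isLt]
  rw [← hy]

end Stmt6c
section Stmt6d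

open Finset

attribute [local instance] Classical.propDecidable

variable {V : Type} [Fintype V]

theorem phase1_accepts (A : OnlineAlg) (G : SimpleGraph V) (ψ : Fin (Fintype.card V) ≃ V)
    (t : Fin (Fintype.card V)) (ht : t.val < (fedSet A G ψ).card) :
    accepts A G (phiOrd A G ψ) t = accepts (pAlg A) G ψ (sigFun A G ψ t) := by
  have hmem : sigFun A G ψ t ∈ fedSet A G ψ := sigFun_mem_pos A G ψ t ht
  have hfed : fedP A G ψ (sigFun A G ψ t) := (Finset.mem_filter.mp hmem).2
  rw [accepts_of_fed A G ψ _ hfed]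
  -- the fed set below `sigFun t` is the image of the first `t` fed indices
  have himg : fedBelow A G ψ (sigFun A G ψ t) =
      Finset.image (fun s : Fin t.val =>
        (fedSet A G ψ).orderEmbOfFin rfl ⟨s.val, lt_trans s.isLt ht⟩) Finset.univ := by
    ext x
    simp only [Finset.mem_image, Finset.mem_univ, true_and]
    constructor
    · intro hx
      have hx1 : x ∈ fedSet A G ψ := (Finset.mem_filter.mp hx).1
      have hx2 : x < sigFun A G ψ t := (Finset.mem_filter.mp hx).2
      have hco : x ∈ (↑(fedSet A G ψ) : Set (Fin (Fintype.card V))) := hx1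
      rw [← Finset.range_orderEmbOfFin (fedSet A G ψ) rfl] at hco
      obtain ⟨y, hy⟩ := hco
      rw [← hy] at hx2
      rw [sigFun_pos A G ψ t ht] at hx2
      have hyt : y < (⟨t.val, ht⟩ : Fin (fedSet A G ψ).card) :=
        ((fedSet A G ψ).orderEmbOfFin rfl).lt_iff_lt.mp hx2
      refine ⟨⟨y.val, hyt⟩, ?_⟩
      rw [← hy]
    · rintro ⟨s, rfl⟩
      refine Finset.mem_filter.mpr ⟨Finset.orderEmbOfFin_mem _ _ _, ?_⟩
      rw [sigFun_pos A G ψ t ht]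
      exact ((fedSet A G ψ).orderEmbOfFin rfl).strictMono
        (show (⟨s.val, _⟩ : Fin (fedSet A G ψ).card) < ⟨t.val, ht⟩ from s.isLt)
  have hinj : Function.Injective (fun s : Fin t.val =>
      (fedSet A G ψ).orderEmbOfFin rfl ⟨s.val, lt_trans s.isLt ht⟩) := by
    intro s1 s2 hs
    have := ((fedSet A G ψ).orderEmbOfFin rfl).injective hs
    injection this with hv
    exact Fin.ext hv
  have hc : (fedBelow A G ψ (sigFun A G ψ t)).card = t.val := by
    rw [himg, Finset.card_image_of_injective _ hinj, Finset.card_univ, Fintype.card_fin]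
  -- enumeration of the fed set below agrees with sigFun
  have henum2 : ∀ s : Fin ((fedBelow A G ψ (sigFun A G ψ t)).card),
      (fedBelow A G ψ (sigFun A G ψ t)).orderEmbOfFin rfl s =
        (fedSet A G ψ).orderEmbOfFin rfl ⟨s.val, lt_trans (lt_of_lt_of_eq s.isLt hc) ht⟩ := by
    have huniq := Finset.orderEmbOfFin_unique (s := fedBelow A G ψ (sigFun A G ψ t))
      (k := (fedBelow A G ψ (sigFun A G ψ t)).card) rfl
      (f := fun s => (fedSet A G ψ).orderEmbOfFin rfl
        ⟨s.val, lt_trans (lt_of_lt_of_eq s.isLt hc) ht⟩)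
      (fun s => by
        refine Finset.mem_filter.mpr ⟨Finset.orderEmbOfFin_mem _ _ _, ?_⟩
        refine lt_of_lt_of_eq ?_ (sigFun_pos A G ψ t ht).symm
        exact ((fedSet A G ψ).orderEmbOfFin rfl).strictMono
          (show (⟨s.val, _⟩ : Fin (fedSet A G ψ).card) < ⟨t.val, ht⟩ from
            Fin.mk_lt_mk.mpr (lt_of_lt_of_eq s.isLt hc)))
      (fun s1 s2 h12 => by
        exact ((fedSet A G ψ).orderEmbOfFin rfl).strictMono
          (show (⟨s1.val, _⟩ : Fin (fedSet A G ψ).card) < ⟨s2.val, _⟩ from h12))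
    intro s
    exact (congrFun huniq s).symm
  -- the vertices agree
  have hvert : ∀ a : Fin ((fedBelow A G ψ (sigFun A G ψ t)).card + 1),
      nthV A G ψ (sigFun A G ψ t) a =
        phiOrd A G ψ ⟨a.val, by have := a.isLt; have := t.isLt; omega⟩ := by
    intro a
    unfold nthV
    split
    next h =>
      rw [henum2 ⟨a.val, h⟩, phiOrd_apply]
      exact congrArg ψ (sigFun_pos A G ψ
        ⟨a.val, by have := a.isLt; have := t.isLt; omega⟩
        (show a.val < (fedSet A G ψ).card from by omega)).symm
    next h =>
      have hav : a.val = t.val := by have := a.isLt; omega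
      rw [phiOrd_apply]
      exact congrArg ψ (congrArg _ (Fin.ext hav.symm))
  -- put everything together
  show A t.val (revealedMatrix G (phiOrd A G ψ) t) = _
  refine (alg_congr A hc _ _ ?_).symm
  intro a b
  rw [hvert a, hvert b]
  exact (rm_eq_decide G (phiOrd A G ψ) t ⟨a.val, by have := a.isLt; omega⟩
    ⟨b.val, by have := b.isLt; omega⟩ (by have := a.isLt; have := t.isLt; omega)
    (by have := b.isLt; have := t.isLt; omega)).symm

theorem phase1_nonpointless (A : OnlineAlg) (G : SimpleGraph V)
    (ψ : Fin (Fintype.card V) ≃ V) (t : Fin (Fintype.card V))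
    (ht : t.val < (fedSet A G ψ).card) (j : Fin (Fintype.card V)) (hj : j < t)
    (hacc : accepts A G (phiOrd A G ψ) j = true) : ¬ G.Adj (phiOrd A G ψ j) (phiOrd A G ψ t) := by
  have hjk : j.val < (fedSet A G ψ).card := lt_trans hj ht
  rw [phase1_accepts A G ψ j hjk] at hacc
  have hfed : fedP A G ψ (sigFun A G ψ t) :=
    (Finset.mem_filter.mp (sigFun_mem_pos A G ψ t ht)).2
  have hlt : sigFun A G ψ j < sigFun A G ψ t := by
    rw [sigFun_pos A G ψ j hjk, sigFun_pos A G ψ t ht]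
    exact ((fedSet A G ψ).orderEmbOfFin rfl).strictMono
      (show (⟨j.val, hjk⟩ : Fin (fedSet A G ψ).card) < ⟨t.val, ht⟩ from hj)
  have := hfed (sigFun A G ψ j) hlt hacc
  rw [phiOrd_apply, phiOrd_apply]
  exact this

theorem phase2 (A : OnlineAlg) (G : SimpleGraph V) (ψ : Fin (Fintype.card V) ≃ V)
    (t : Fin (Fintype.card V)) (ht : ¬ t.val < (fedSet A G ψ).card) :
    ∃ s : Fin (Fintype.card V), s.val < (fedSet A G ψ).card ∧
      accepts A G (phiOrd A G ψ) s = true ∧ G.Adj (phiOrd A G ψ s) (phiOrd A G ψ t) := by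
  have hnm : sigFun A G ψ t ∉ fedSet A G ψ := sigFun_mem_neg A G ψ t ht
  have hnf : ¬ fedP A G ψ (sigFun A G ψ t) := by
    intro hf
    exact hnm (Finset.mem_filter.mpr ⟨Finset.mem_univ _, hf⟩)
  unfold fedP at hnf
  push_neg at hnf
  obtain ⟨j, hj1, hj2, hj3⟩ := hnf
  have hjfed : j ∈ fedSet A G ψ :=
    Finset.mem_filter.mpr ⟨Finset.mem_univ _, fed_of_accepts A G ψ j hj2⟩
  obtain ⟨s, hs1, hs2⟩ := mem_fedSet_exists A G ψ j hjfed
  refine ⟨s, hs1, ?_, ?_⟩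
  · rw [phase1_accepts A G ψ s hs1, hs2]
    exact hj2
  · rw [phiOrd_apply, phiOrd_apply, hs2]
    exact hj3

end Stmt6d
/-- for every graph `G` and online independent set algorithm `A` there is an
ordering `φ` that is conservative with respect to the run of `A` (whenever the vertex
revealed at step `i` has a neighbor among the already accepted vertices, so does every
vertex revealed later) and on which `A` accepts an independent set of size at most
`I^O(G)`. -/
theorem statement6 {V : Type} [Fintype V] (G : SimpleGraph V) (A : OnlineAlg) :
    ∃ φ : Fin (Fintype.card V) ≃ V,
      (∀ i i' : Fin (Fintype.card V), i < i' →
        (∃ j : Fin (Fintype.card V), j < i ∧ accepts A G φ j = true ∧ G.Adj (φ j) (φ i)) →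
        (∃ j : Fin (Fintype.card V), j < i ∧ accepts A G φ j = true ∧ G.Adj (φ j) (φ i'))) ∧
      (IsIndep G (acceptedSet A G φ) →
        (acceptedSet A G φ).card ≤ onlineIndepNum G) := by
  classical
  -- choose a worst-case ordering for the pointless-skipping simulation `pAlg A`
  have hne : {m | ∃ ψ : Fin (Fintype.card V) ≃ V,
      (acceptedSet (pAlg A) G ψ).card = m}.Nonempty :=
    ⟨_, (Fintype.equivFin V).symm, rfl⟩
  obtain ⟨ψ, hψ⟩ := Nat.sInf_mem hne
  refine ⟨phiOrd A G ψ, ?_, ?_⟩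
  · -- conservativeness
    intro i i' hlt hpt
    by_cases hik : i.val < (fedSet A G ψ).card
    · obtain ⟨j, hj1, hj2, hj3⟩ := hpt
      exact absurd hj3 (phase1_nonpointless A G ψ i hik j hj1 hj2)
    · have hik' : ¬ i'.val < (fedSet A G ψ).card := by
        have : i.val < i'.val := hlt
        omega
      obtain ⟨s, hs1, hs2, hs3⟩ := phase2 A G ψ i' hik'
      exact ⟨s, show s.val < i.val by omega, hs2, hs3⟩
  · -- size bound
    intro hind
    -- every request accepted by `A` on `phiOrd` is a phase-1 (fed) request
    have hph : ∀ t : Fin (Fintype.card V), accepts A G (phiOrd A G ψ) t = true →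
        t.val < (fedSet A G ψ).card := by
      intro t hacc
      by_contra htk
      obtain ⟨s, _, hs2, hs3⟩ := phase2 A G ψ t htk
      have hmem : ∀ u : Fin (Fintype.card V), accepts A G (phiOrd A G ψ) u = true →
          phiOrd A G ψ u ∈ acceptedSet A G (phiOrd A G ψ) := by
        intro u hu
        refine Finset.mem_filter.mpr ⟨Finset.mem_univ _, ?_⟩
        rw [Equiv.symm_apply_apply]
        exact hu
      exact hind _ (hmem s hs2) _ (hmem t hacc) hs3
    -- the accepted sets of `A` on `phiOrd` and of `pAlg A` on `ψ` have the same size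
    have hcards : (acceptedSet A G (phiOrd A G ψ)).card =
        (acceptedSet (pAlg A) G ψ).card := by
      rw [acceptedSet_card, acceptedSet_card]
      refine Finset.card_bij (fun t _ => sigFun A G ψ t) ?_ ?_ ?_
      · intro t ht
        have h2 := (Finset.mem_filter.mp ht).2
        refine Finset.mem_filter.mpr ⟨Finset.mem_univ _, ?_⟩
        rw [← phase1_accepts A G ψ t (hph t h2)]
        exact h2
      · intro t1 _ t2 _ he
        exact (sigFun_bijective A G ψ).1 he
      · intro j hj
        have hjacc := (Finset.mem_filter.mp hj).2
        have hjfed : j ∈ fedSet A G ψ :=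
          Finset.mem_filter.mpr ⟨Finset.mem_univ _, fed_of_accepts A G ψ j hjacc⟩
        obtain ⟨t, ht, hte⟩ := mem_fedSet_exists A G ψ j hjfed
        refine ⟨t, Finset.mem_filter.mpr ⟨Finset.mem_univ _, ?_⟩, hte⟩
        rw [phase1_accepts A G ψ t ht, hte]
        exact hjacc
    rw [hcards, hψ]
    -- the guaranteed value of `pAlg A` is at most the online independence number
    refine le_csSup ?_ ?_
    · refine ⟨Fintype.card V, ?_⟩
      rintro m ⟨Alg, hAlg⟩
      exact ((hAlg (Fintype.equivFin V).symm).2).trans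
        ((Finset.card_le_univ _).trans_eq Finset.card_univ)
    · exact ⟨pAlg A, fun φ' => ⟨pAlg_indep A G φ', Nat.sInf_le ⟨φ', rfl⟩⟩⟩

end OnlinePaper
end

section
/- Let G be a finite simple graph with at least one isolated vertex. Then for every deterministic online algorithm ALG for Online Dominating Set, GDS(G) ≤ ALG(G); that is, the greedy algorithm's worst-case dominating set size on G is at most that of every online algorithm. -/
namespace OnlinePaper

variable {V : Type}

section Aux

variable {W : Type} [Fintype W]

lemma accepts_gds_eq (G : SimpleGraph W) (φ : Fin (Fintype.card W) ≃ W)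
    (i : Fin (Fintype.card W)) :
    accepts gdsAlg G φ i = gisAux i.val (revealedMatrix G φ i) := rfl

lemma mem_acceptedSet_iff (Alg : OnlineAlg) (G : SimpleGraph W)
    (φ : Fin (Fintype.card W) ≃ W) (v : W) :
    v ∈ acceptedSet Alg G φ ↔ accepts Alg G φ (φ.symm v) = true := by
  simp [acceptedSet]

/-- An isolated vertex is always accepted by GDS. -/
lemma gds_accepts_isolated (G : SimpleGraph W) {v : W} (hv : IsIsolated G v)
    (φ : Fin (Fintype.card W) ≃ W) :
    v ∈ acceptedSet gdsAlg G φ := by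
  rw [mem_acceptedSet_iff, accepts_gds_eq, gisAux]
  rw [decide_eq_true_eq]
  intro j _
  classical
  apply decide_eq_false
  intro hadj
  have : G.Adj (φ ⟨j.val, by have := (φ.symm v).isLt; omega⟩) (φ (φ.symm v)) := by
    convert hadj using 2 <;> exact Fin.ext rfl
  rw [Equiv.apply_symm_apply] at this
  exact hv _ this.symm

/-- The set accepted by GDS is independent. -/
lemma gds_indep (G : SimpleGraph W) (φ : Fin (Fintype.card W) ≃ W) :
    IsIndep G (acceptedSet gdsAlg G φ) := by
  have key : ∀ p q : Fin (Fintype.card W), p < q →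
      accepts gdsAlg G φ p = true → accepts gdsAlg G φ q = true →
      ¬ G.Adj (φ p) (φ q) := by
    intro p q hlt hp hq hadj
    rw [accepts_gds_eq, gisAux, decide_eq_true_eq] at hq
    have h1 := hq ⟨p.val, hlt⟩ (by exact hp)
    classical
    have h2 : revealedMatrix G φ q (Fin.castSucc ⟨p.val, hlt⟩) (Fin.last q.val) = true := by
      apply decide_eq_true
      show G.Adj (φ ⟨p.val, _⟩) (φ ⟨q.val, _⟩)
      convert hadj using 2
    rw [h1] at h2
    exact Bool.false_ne_true h2
  intro a ha b hb hadj
  rw [mem_acceptedSet_iff] at ha hb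
  have hne : φ.symm a ≠ φ.symm b := fun h => hadj.ne (by simpa using congrArg φ h)
  rcases hne.lt_or_gt with h | h
  · exact key _ _ h ha hb (by simpa using hadj)
  · exact key _ _ h hb ha (by simpa using hadj.symm)

/-- If the first `i+1` revealed vertices are pairwise nonadjacent, the revealed matrix
is the zero matrix. -/
lemma revealedMatrix_eq_zero (G : SimpleGraph W) (φ : Fin (Fintype.card W) ≃ W)
    (i : Fin (Fintype.card W))
    (h : ∀ a b : Fin (Fintype.card W), a.val ≤ i.val → b.val ≤ i.val →
      ¬ G.Adj (φ a) (φ b)) :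
    revealedMatrix G φ i = fun _ _ => false := by
  classical
  funext a b
  apply decide_eq_false
  exact h ⟨a.val, by have := a.isLt; have := i.isLt; omega⟩
    ⟨b.val, by have := b.isLt; have := i.isLt; omega⟩
    (Nat.lt_succ_iff.mp a.isLt) (Nat.lt_succ_iff.mp b.isLt)

/-- A correct dominating-set algorithm must accept when the revealed matrix is zero
and the newly revealed vertex could be an isolated vertex. -/
lemma alg_accepts_zero (G : SimpleGraph W) {v : W} (hv : IsIsolated G v)
    (A : OnlineAlg) (hA : ∀ φ : Fin (Fintype.card W) ≃ W, IsDom G (acceptedSet A G φ))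
    (i : Fin (Fintype.card W)) (φ : Fin (Fintype.card W) ≃ W)
    (hφv : φ i = v) (hzero : revealedMatrix G φ i = fun _ _ => false) :
    A i.val (fun _ _ => false) = true := by
  by_contra h
  have hsymm : φ.symm v = i := by rw [← hφv, Equiv.symm_apply_apply]
  have hacc : accepts A G φ (φ.symm v) = false := by
    rw [hsymm]
    unfold accepts
    rw [hzero]
    simpa using h
  rcases hA φ v with hmem | ⟨u, hu, hadj⟩
  · rw [mem_acceptedSet_iff, hacc] at hmem
    exact Bool.false_ne_true hmem
  · exact hv u hadj.symm

/-- There is an ordering putting a given finset first. -/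
lemma exists_order_finset (S : Finset W) :
    ∃ ψ : Fin (Fintype.card W) ≃ W, ∀ j, ψ j ∈ S ↔ j.val < S.card := by
  classical
  have hk : S.card ≤ Fintype.card W := S.card_le_univ
  let eS : Fin S.card ≃ {x // x ∈ S} := S.equivFin.symm
  let eC : Fin (Fintype.card W - S.card) ≃ {x // x ∉ S} :=
    (finCongr (by rw [Finset.card_compl])).trans
      ((Sᶜ).equivFin.symm.trans (Equiv.subtypeEquivRight (fun x => Finset.mem_compl)))
  let ψ : Fin (Fintype.card W) ≃ W :=
    (finCongr (Nat.add_sub_cancel' hk).symm).trans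
      ((finSumFinEquiv.symm).trans ((Equiv.sumCongr eS eC).trans (Equiv.sumCompl (· ∈ S))))
  refine ⟨ψ, fun j => ?_⟩
  have hval : ((finCongr (Nat.add_sub_cancel' hk).symm) j).val = j.val := rfl
  rcases hcase : finSumFinEquiv.symm ((finCongr (Nat.add_sub_cancel' hk).symm) j)
      with a | b
  · have hj' : (finCongr (Nat.add_sub_cancel' hk).symm) j = finSumFinEquiv (Sum.inl a) := by
      rw [← hcase, Equiv.apply_symm_apply]
    have hlt : j.val < S.card := by
      have : j.val = a.val := by rw [← hval, hj']; rfl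
      rw [this]; exact a.isLt
    have : ψ j = (eS a).val := by
      show (Equiv.sumCompl (· ∈ S)) ((Equiv.sumCongr eS eC) (finSumFinEquiv.symm _)) = _
      rw [hcase]
      rfl
    rw [this]
    simpa [hlt] using (eS a).property
  · have hj' : (finCongr (Nat.add_sub_cancel' hk).symm) j = finSumFinEquiv (Sum.inr b) := by
      rw [← hcase, Equiv.apply_symm_apply]
    have hge : ¬ j.val < S.card := by
      have : j.val = S.card + b.val := by rw [← hval, hj']; rfl
      omega
    have : ψ j = (eC b).val := by
      show (Equiv.sumCompl (· ∈ S)) ((Equiv.sumCongr eS eC) (finSumFinEquiv.symm _)) = _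
      rw [hcase]
      rfl
    rw [this]
    simpa [hge] using (eC b).property

end Aux

/-- if `G` has at least one isolated vertex then every online dominating set
algorithm `A` satisfies `GDS(G) ≤ A(G)`. -/
theorem statement12 {V : Type} [Fintype V] (G : SimpleGraph V)
    (hG : ∃ v : V, IsIsolated G v) (A : OnlineAlg)
    (hA : ∀ φ : Fin (Fintype.card V) ≃ V, IsDom G (acceptedSet A G φ)) :
    maxScore gdsAlg G ≤ maxScore A G := by
  classical
  obtain ⟨v, hv⟩ := hG
  -- the set of scores of GDS is nonempty and bounded, so the max is attained
  have hbddG : BddAbove {m | ∃ φ : Fin (Fintype.card V) ≃ V,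
      (acceptedSet gdsAlg G φ).card = m} := by
    refine ⟨Fintype.card V, ?_⟩
    rintro m ⟨φ, rfl⟩
    exact (Finset.card_le_univ _).trans_eq Finset.card_univ
  have hneG : {m | ∃ φ : Fin (Fintype.card V) ≃ V,
      (acceptedSet gdsAlg G φ).card = m}.Nonempty :=
    ⟨_, (Fintype.equivFin V).symm, rfl⟩
  obtain ⟨φmax, hφmax⟩ := Nat.sSup_mem hneG hbddG
  set S : Finset V := acceptedSet gdsAlg G φmax with hS
  have hscore : maxScore gdsAlg G = S.card := hφmax.symm
  have hvS : v ∈ S := gds_accepts_isolated G hv φmax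
  have hSind : IsIndep G S := gds_indep G φmax
  obtain ⟨ψ, hψ⟩ := exists_order_finset S
  have hj0 : (ψ.symm v).val < S.card := by
    rw [← hψ (ψ.symm v), Equiv.apply_symm_apply]; exact hvS
  -- A must accept every step i < S.card when the revealed matrix is zero
  have hAzero : ∀ i : Fin (Fintype.card V), i.val < S.card →
      A i.val (fun _ _ => false) = true := by
    intro i hi
    set j0 := ψ.symm v with hj0def
    set ψi : Fin (Fintype.card V) ≃ V := (Equiv.swap i j0).trans ψ with hψi
    have hmemS : ∀ j : Fin (Fintype.card V), j.val ≤ i.val → ψi j ∈ S := by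
      intro j hj
      show ψ (Equiv.swap i j0 j) ∈ S
      rw [hψ]
      rcases eq_or_ne j i with rfl | hji
      · rw [Equiv.swap_apply_left]; exact hj0
      rcases eq_or_ne j j0 with rfl | hjj0
      · rw [Equiv.swap_apply_right]; exact hi
      · rw [Equiv.swap_apply_of_ne_of_ne hji hjj0]
        exact lt_of_le_of_lt hj hi
    have hψiv : ψi i = v := by
      show ψ (Equiv.swap i j0 i) = v
      rw [Equiv.swap_apply_left]
      exact Equiv.apply_symm_apply ψ v
    have hzero : revealedMatrix G ψi i = fun _ _ => false := by
      apply revealedMatrix_eq_zero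
      intro a b ha hb
      exact hSind _ (hmemS a ha) _ (hmemS b hb)
    exact alg_accepts_zero G hv A hA i ψi hψiv hzero
  -- on the ordering ψ, A accepts all of the first S.card vertices
  have hsub : S ⊆ acceptedSet A G ψ := by
    intro u hu
    rw [mem_acceptedSet_iff]
    have hlt : (ψ.symm u).val < S.card := by
      rw [← hψ (ψ.symm u), Equiv.apply_symm_apply]; exact hu
    have hzero : revealedMatrix G ψ (ψ.symm u) = fun _ _ => false := by
      apply revealedMatrix_eq_zero
      intro a b ha hb
      refine hSind _ ?_ _ ?_ <;> rw [hψ] <;> omega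
    show A (ψ.symm u).val (revealedMatrix G ψ (ψ.symm u)) = true
    rw [hzero]
    exact hAzero _ hlt
  have hcard : S.card ≤ (acceptedSet A G ψ).card := Finset.card_le_card hsub
  have hbddA : BddAbove {m | ∃ φ : Fin (Fintype.card V) ≃ V,
      (acceptedSet A G φ).card = m} := by
    refine ⟨Fintype.card V, ?_⟩
    rintro m ⟨φ, rfl⟩
    exact (Finset.card_le_univ _).trans_eq Finset.card_univ
  have hle : (acceptedSet A G ψ).card ≤ maxScore A G :=
    le_csSup hbddA ⟨ψ, rfl⟩
  rw [hscore]
  exact hcard.trans hle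

end OnlinePaper
end
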